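/- There do not exist five pairwise tangent horospheres: there are no p : Fin 5 → ℝ² and R : Fin 5 → ℝ with R i > 0 for all i and ‖p i − p j‖² = 4 (R i) (R j) for all i ≠ j. -/

import Mathlib

/-- There do not exist five pairwise tangent horospheres. -/
theorem no_five_pairwise_tangent_horospheres :
    ¬ ∃ (p : Fin 5 → EuclideanSpace ℝ (Fin 2)) (R : Fin 5 → ℝ),
        (∀ i, 0 < R i) ∧
        (∀ i j, i ≠ j → ‖p i - p j‖ ^ 2 = 4 * R i * R j) := by
  rintro ⟨p, R, hR, htan⟩
  -- coordinate form of the tangency condition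
  have hnorm : ∀ i j, i ≠ j →
      (p i 0 - p j 0) ^ 2 + (p i 1 - p j 1) ^ 2 = 4 * R i * R j := by
    intro i j hij
    have h := htan i j hij
    rw [EuclideanSpace.norm_eq] at h
    rw [Real.sq_sqrt (by positivity)] at h
    simpa [Fin.sum_univ_two, sq_abs] using h
  have hRne : ∀ i, R i ≠ 0 := fun i => (hR i).ne'
  -- lift to ℝ⁴
  set v : Fin 5 → Fin 4 → ℝ := fun i =>
    ![1 / (2 * R i), ((p i 0) ^ 2 + (p i 1) ^ 2) / (2 * R i),
      p i 0 / (2 * R i), p i 1 / (2 * R i)] with hv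
  set E : Fin 5 → Fin 5 → ℝ := fun i j =>
    v i 0 * v j 1 + v j 0 * v i 1 - 2 * (v i 2 * v j 2 + v i 3 * v j 3) with hEdef
  have hE : ∀ i j, E i j = if i = j then 0 else 1 := by
    intro i j
    by_cases hij : i = j
    · subst hij
      simp only [hEdef, hv, if_pos rfl, if_true]
      simp only [Matrix.cons_val_zero, Matrix.cons_val_one, Matrix.head_cons,
        Matrix.cons_val_two, Matrix.tail_cons, Matrix.cons_val_three]
      field_simp
      ring
    · simp only [hEdef, hv, if_neg hij]
      simp only [Matrix.cons_val_zero, Matrix.cons_val_one, Matrix.head_cons,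
        Matrix.cons_val_two, Matrix.tail_cons, Matrix.cons_val_three]
      have h := hnorm i j hij
      have h2i : (2 : ℝ) * R i ≠ 0 := mul_ne_zero two_ne_zero (hRne i)
      have h2j : (2 : ℝ) * R j ≠ 0 := mul_ne_zero two_ne_zero (hRne j)
      field_simp
      linear_combination (norm := skip) ((R i)⁻¹ * (R j)⁻¹) * h
      field_simp
      ring
      linear_combination (4 * R j * (R j)⁻¹) * mul_inv_cancel₀ (hRne i) + 4 * mul_inv_cancel₀ (hRne j)
  -- 5 vectors in ℝ⁴ are dependent
  have hdep : ¬ LinearIndependent ℝ v := by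
    intro hli
    have := hli.fintype_card_le_finrank
    simp [Module.finrank_fin_fun] at this
  rw [Fintype.not_linearIndependent_iff] at hdep
  obtain ⟨g, hsum, i₀, hgi₀⟩ := hdep
  have hs : ∀ k, ∑ i, g i * v i k = 0 := by
    intro k
    have := congrFun hsum k
    simpa [Finset.sum_apply] using this
  have key : ∀ j, (∑ i, g i) - g j = 0 := by
    intro j
    have h1 : ∑ i, g i * E i j = 0 := by
      have : ∑ i, g i * E i j =
          (∑ i, g i * v i 0) * v j 1 + (∑ i, g i * v i 1) * v j 0
          - 2 * ((∑ i, g i * v i 2) * v j 2 + (∑ i, g i * v i 3) * v j 3) := by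
        simp only [hEdef, Finset.sum_mul, ← Finset.sum_sub_distrib, ← Finset.sum_add_distrib,
          Finset.mul_sum]
        apply Finset.sum_congr rfl
        intro i _
        ring
      rw [this, hs 0, hs 1, hs 2, hs 3]
      ring
    have h2 : ∑ i, g i * E i j = (∑ i, g i) - g j := by
      have : ∀ i : Fin 5, g i * E i j = g i - (if i = j then g i else 0) := by
        intro i
        rw [hE]
        split_ifs <;> ring
      rw [Finset.sum_congr rfl fun i _ => this i, Finset.sum_sub_distrib,
        Finset.sum_ite_eq' Finset.univ j g, if_pos (Finset.mem_univ j)]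
    rw [← h1, h2]
  have hgS : ∀ j, g j = ∑ i, g i := by
    intro j
    have := key j
    linarith
  have hS : (∑ i, g i) = 0 := by
    have h5 : (∑ i, g i) = 5 * (∑ i, g i) := by
      calc (∑ i, g i) = ∑ j : Fin 5, (∑ i, g i) := by
            exact Finset.sum_congr rfl fun j _ => hgS j
          _ = 5 * (∑ i, g i) := by simp [Finset.sum_const, Finset.card_univ]
    linarith
  exact hgi₀ (by rw [hgS i₀, hS])
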